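/- Every infinite lexicographic function ℓ⟨μ⟩ for 0 ≤ μ ≤ 1 has total influence at most 4/3; equivalently, for μ = Σ_{i≥0} 2^{−k_i} with 1 ≤ k_0 < k_1 < ⋯, we have Σ_{i≥0} (k_i − 2i)·2^{1−k_i} ≤ 4/3. -/

import Mathlib

noncomputable section

/-- The k-th binary digit of μ (k ≥ 1 are the fractional positions). -/
def binBit (μ : ℝ) (k : ℕ) : ℕ := (⌊μ * 2 ^ k⌋).toNat % 2

/-- Number of 1-bits of μ at positions strictly before k. -/
def onesBefore (μ : ℝ) (k : ℕ) : ℕ := ∑ j ∈ Finset.range k, binBit μ j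

/-- Total influence of the infinite lexicographic function ℓ⟨μ⟩:
if μ = Σ_i 2^{-k_i} with 1 ≤ k_0 < k_1 < ⋯ the positions of the 1-bits,
this equals Σ_i (k_i − 2i) · 2^{1−k_i}. -/
def lexInfluence (μ : ℝ) : ℝ :=
  ∑' k : ℕ, (binBit μ k : ℝ) * ((k : ℝ) - 2 * (onesBefore μ k : ℝ)) * (2 : ℝ) ^ (1 - (k : ℤ))

lemma binBit_le_one (μ : ℝ) (k : ℕ) : binBit μ k ≤ 1 :=
  Nat.lt_succ_iff.mp (Nat.mod_lt _ (by norm_num))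

lemma onesBefore_le (μ : ℝ) (k : ℕ) : onesBefore μ k ≤ k := by
  calc onesBefore μ k ≤ ∑ _j ∈ Finset.range k, 1 :=
        Finset.sum_le_sum fun j _ => binBit_le_one μ j
    _ = k := by simp

/-- Key integer inequality: m ≤ 2^(m-1). -/
lemma int_le_two_zpow (m : ℤ) : (m : ℝ) ≤ (2 : ℝ) ^ (m - 1) := by
  rcases le_or_gt m 0 with hm | hm
  · calc (m : ℝ) ≤ 0 := by exact_mod_cast hm
      _ ≤ (2 : ℝ) ^ (m - 1) := le_of_lt (zpow_pos (by norm_num) _)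
  · obtain ⟨j, rfl⟩ : ∃ j : ℕ, m = (j : ℤ) + 1 := ⟨(m - 1).toNat, by omega⟩
    have h2 : ((j : ℤ) + 1 - 1) = (j : ℤ) := by ring
    rw [h2, zpow_natCast]
    have : (j : ℕ) < 2 ^ j := Nat.lt_two_pow_self (n := j)
    push_cast
    calc (j : ℝ) + 1 ≤ (2 ^ j : ℕ) := by exact_mod_cast this
      _ = (2 : ℝ) ^ j := by push_cast; ring

/-- Every infinite lexicographic function has total influence at most 4/3. -/
theorem lexInfluence_le (μ : ℝ) (h0 : 0 ≤ μ) (h1 : μ ≤ 1) : lexInfluence μ ≤ 4 / 3 := by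
  set f : ℕ → ℝ := fun k =>
    (binBit μ k : ℝ) * ((k : ℝ) - 2 * (onesBefore μ k : ℝ)) * (2 : ℝ) ^ (1 - (k : ℤ)) with hf
  -- summability
  have hsum : Summable f := by
    have hbase : Summable (fun k : ℕ => 2 * ((k : ℝ) * (1 / 2 : ℝ) ^ k)) :=
      (summable_pow_mul_geometric_of_norm_lt_one 1 (by norm_num : ‖(1/2 : ℝ)‖ < 1)).mul_left 2
        |>.congr (fun k => by ring_nf)
    refine Summable.of_norm_bounded hbase fun k => ?_
    have h1' : |(binBit μ k : ℝ)| ≤ 1 := by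
      rw [abs_of_nonneg (by positivity)]
      exact_mod_cast binBit_le_one μ k
    have h2' : |(k : ℝ) - 2 * (onesBefore μ k : ℝ)| ≤ (k : ℝ) := by
      rw [abs_le]
      constructor
      · have := onesBefore_le μ k
        have : (onesBefore μ k : ℝ) ≤ (k : ℝ) := by exact_mod_cast this
        nlinarith
      · nlinarith [Nat.cast_nonneg (α := ℝ) (onesBefore μ k)]
    have h3' : |(2 : ℝ) ^ (1 - (k : ℤ))| = 2 * (1 / 2) ^ k := by
      rw [abs_of_pos (zpow_pos (by norm_num) _)]
      rw [zpow_sub₀ (by norm_num : (2:ℝ) ≠ 0), zpow_one, zpow_natCast]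
      rw [div_pow, one_pow]
      field_simp
    calc ‖f k‖ = |(binBit μ k : ℝ)| * |(k : ℝ) - 2 * (onesBefore μ k : ℝ)|
          * |(2 : ℝ) ^ (1 - (k : ℤ))| := by
          simp only [hf, Real.norm_eq_abs]; rw [abs_mul, abs_mul]
      _ ≤ 1 * (k : ℝ) * (2 * (1 / 2) ^ k) := by
          rw [h3']
          apply mul_le_mul (mul_le_mul h1' h2' (abs_nonneg _) zero_le_one) le_rfl
            (by positivity) (by positivity)
      _ = 2 * ((k : ℝ) * (1 / 2 : ℝ) ^ k) := by ring
  -- partial sum bound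
  have key : ∀ n : ℕ, ∑ k ∈ Finset.range n, f k
      ≤ 4 / 3 - (4 / 3) * (4 : ℝ)⁻¹ ^ (onesBefore μ n) := by
    intro n
    induction n with
    | zero => simp [onesBefore]
    | succ n ih =>
      have hones : onesBefore μ (n + 1) = onesBefore μ n + binBit μ n := by
        simp [onesBefore, Finset.sum_range_succ]
      rw [Finset.sum_range_succ]
      rcases Nat.mod_two_eq_zero_or_one ((⌊μ * 2 ^ n⌋).toNat) with hb | hb
      · have hb' : binBit μ n = 0 := hb
        have : f n = 0 := by simp [hf, hb']
        rw [this, hones, hb']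
        simpa using ih
      · have hb' : binBit μ n = 1 := hb
        set o := onesBefore μ n with ho
        have hmain : f n ≤ (4 : ℝ)⁻¹ ^ o := by
          have hfe : f n = ((n : ℝ) - 2 * (o : ℝ)) * (2 : ℝ) ^ (1 - (n : ℤ)) := by
            simp [hf, hb', ho]
          rw [hfe]
          have hcast : ((n : ℝ) - 2 * (o : ℝ)) = (((n : ℤ) - 2 * o : ℤ) : ℝ) := by
            push_cast; ring
          have h4 : ((4 : ℝ)⁻¹) ^ o = (2 : ℝ) ^ (-(2 * (o : ℤ))) := by
            rw [zpow_neg]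
            rw [show (2 * (o:ℤ)) = ((2 * o : ℕ) : ℤ) by push_cast; ring, zpow_natCast]
            rw [pow_mul, inv_pow]
            norm_num
          rw [hcast, h4]
          set m : ℤ := (n : ℤ) - 2 * o with hm
          have hle : (m : ℝ) ≤ (2 : ℝ) ^ (m - 1) := int_le_two_zpow m
          calc (m : ℝ) * (2 : ℝ) ^ (1 - (n : ℤ))
              ≤ (2 : ℝ) ^ (m - 1) * (2 : ℝ) ^ (1 - (n : ℤ)) := by
                apply mul_le_mul_of_nonneg_right hle (le_of_lt (zpow_pos (by norm_num) _))
            _ = (2 : ℝ) ^ (-(2 * (o : ℤ))) := by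
                rw [← zpow_add₀ (by norm_num : (2:ℝ) ≠ 0)]
                congr 1
                omega
        have hpow : (4:ℝ)⁻¹ ^ (o+1) = (4:ℝ)⁻¹ ^ o * 4⁻¹ := pow_succ _ _
        rw [hones, hb', ho]
        linarith [ih, hmain]
  -- pass to the limit
  have htend : Filter.Tendsto (fun n => ∑ k ∈ Finset.range n, f k)
      Filter.atTop (nhds (∑' k, f k)) := hsum.hasSum.tendsto_sum_nat
  have : (∑' k, f k) ≤ 4 / 3 := by
    refine le_of_tendsto htend (Filter.Eventually.of_forall fun n => ?_)
    have := key n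
    have hpos : (0:ℝ) ≤ (4 / 3) * (4 : ℝ)⁻¹ ^ (onesBefore μ n) := by positivity
    linarith
  exact this
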